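/- arXiv:hep-th/0607159 — 2 statements merged into one kernel-verified Lean document; each statement's English description precedes it below -/
import Mathlib

section
/- Let Λ = ℤ^{n+1}/ℤ·(1,1,…,1) be the cocharacter lattice of PGL(n+1), and let ρ be the involution of Λ induced by swapping the last two coordinates of ℤ^{n+1}. If n > 1, then the natural map (Λ^ρ) ⊗ (ℝ/ℤ) → (Λ ⊗ (ℝ/ℤ))^ρ is surjective (hence an isomorphism). -/
/- STATEMENT 0: For Λ = ℤ^{n+1}/ℤ(1,…,1) the cocharacter lattice of PGL(n+1), ρ the
involution induced by swapping the last two coordinates, and n > 1, the natural map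
(Λ^ρ) ⊗ (ℝ/ℤ) → (Λ ⊗ ℝ/ℤ)^ρ is surjective. -/

open TensorProduct

noncomputable section

/-- The circle group ℝ/ℤ. -/
abbrev Circle1 : Type := AddCircle (1 : ℝ)

/-- The diagonal copy of ℤ in ℤ^{n+1}. -/
def diagZ (n : ℕ) : Submodule ℤ (Fin (n + 1) → ℤ) :=
  Submodule.span ℤ {fun _ => (1 : ℤ)}

/-- The cocharacter lattice of PGL(n+1): Λ = ℤ^{n+1}/ℤ·(1,…,1). -/
abbrev PGLlattice (n : ℕ) := (Fin (n + 1) → ℤ) ⧸ diagZ n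

/-- Swapping the last two coordinates of ℤ^{n+1}. -/
def swapLast (n : ℕ) : (Fin (n + 1) → ℤ) →ₗ[ℤ] (Fin (n + 1) → ℤ) :=
  LinearMap.funLeft ℤ ℤ (Equiv.swap ⟨n - 1, by omega⟩ ⟨n, by omega⟩)

/-- `v ↦ (v i - v n)_{i < n}`, the standard splitting of the quotient by the diagonal. -/
def piMap (n : ℕ) : (Fin (n + 1) → ℤ) →ₗ[ℤ] (Fin n → ℤ) where
  toFun v := fun i => v i.castSucc - v (Fin.last n)
  map_add' v w := by funext i; simp; ring
  map_smul' c v := by funext i; simp [smul_eq_mul]; ring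

/-- Extension by `0` at the last coordinate. -/
def extMap (n : ℕ) : (Fin n → ℤ) →ₗ[ℤ] (Fin (n + 1) → ℤ) where
  toFun w := fun j => Fin.lastCases 0 w j
  map_add' w w' := by funext j; induction j using Fin.lastCases <;> simp
  map_smul' c w := by funext j; induction j using Fin.lastCases <;> simp

lemma piMap_diag_mem_ker (n : ℕ) : diagZ n ≤ LinearMap.ker (piMap n) := by
  rw [diagZ, Submodule.span_le, Set.singleton_subset_iff]
  simp only [SetLike.mem_coe, LinearMap.mem_ker]
  funext i
  simp [piMap]

/-- `piMap` descended to the quotient lattice. -/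
def qMap (n : ℕ) : PGLlattice n →ₗ[ℤ] (Fin n → ℤ) :=
  Submodule.liftQ (diagZ n) (piMap n) (piMap_diag_mem_ker n)

lemma mk_ext_pi (n : ℕ) (v : Fin (n + 1) → ℤ) :
    (Submodule.Quotient.mk (extMap n (piMap n v)) : PGLlattice n)
      = Submodule.Quotient.mk v := by
  rw [Submodule.Quotient.eq]
  have h : extMap n (piMap n v) - v = (-(v (Fin.last n))) • (fun _ => (1 : ℤ)) := by
    funext j
    induction j using Fin.lastCases with
    | last => simp [extMap]
    | cast i => simp [extMap, piMap]
  rw [h, diagZ]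
  exact Submodule.smul_mem _ _ (Submodule.subset_span rfl)

/-- The coordinates map `Λ ⊗ T → (Fin n → T)`. -/
def phiMap (n : ℕ) : (PGLlattice n) ⊗[ℤ] Circle1 →ₗ[ℤ] (Fin n → Circle1) :=
  (TensorProduct.piScalarRightHom ℤ ℤ Circle1 (Fin n)) ∘ₗ
    (TensorProduct.comm ℤ (Fin n → ℤ) Circle1).toLinearMap ∘ₗ
    (TensorProduct.map (qMap n) LinearMap.id)

lemma phiMap_tmul (n : ℕ) (v : Fin (n + 1) → ℤ) (t : Circle1) :
    phiMap n ((Submodule.Quotient.mk v : PGLlattice n) ⊗ₜ t)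
      = fun i => (piMap n v i) • t := by
  change TensorProduct.piScalarRightHom ℤ ℤ Circle1 (Fin n) (TensorProduct.comm ℤ (Fin n → ℤ) Circle1
    (TensorProduct.map (qMap n) LinearMap.id ((Submodule.Quotient.mk v : PGLlattice n) ⊗ₜ t))) = _
  rw [TensorProduct.map_tmul]
  simp [qMap, Submodule.liftQ_apply]

/-- The images in `Λ` of the standard basis vectors of ℤ^n ⊂ ℤ^{n+1}. -/
def aVec (n : ℕ) (i : Fin n) : PGLlattice n :=
  Submodule.Quotient.mk (extMap n (Pi.single i 1))

/-- Every element of `Λ ⊗ T` is `∑ aᵢ ⊗ tᵢ` with `tᵢ` its coordinates. -/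
lemma rep (n : ℕ) (z : (PGLlattice n) ⊗[ℤ] Circle1) :
    ∑ i : Fin n, (aVec n i) ⊗ₜ[ℤ] (phiMap n z i) = z := by
  induction z using TensorProduct.induction_on with
  | zero => simp
  | add z z' hz hz' =>
    simp only [map_add, Pi.add_apply, TensorProduct.tmul_add, Finset.sum_add_distrib, hz, hz']
  | tmul lam t =>
    obtain ⟨v, rfl⟩ := Submodule.Quotient.mk_surjective _ lam
    rw [phiMap_tmul]
    have : ∀ i : Fin n, (aVec n i) ⊗ₜ[ℤ] ((piMap n v i) • t)
        = ((piMap n v i) • aVec n i) ⊗ₜ[ℤ] t := by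
      intro i; exact (TensorProduct.smul_tmul _ _ _).symm
    simp only [this]
    rw [← TensorProduct.sum_tmul]
    congr 1
    have : ∑ i : Fin n, (piMap n v i) • aVec n i
        = Submodule.Quotient.mk (extMap n (∑ i : Fin n, (piMap n v i) • Pi.single i 1)) := by
      simp only [aVec, ← Submodule.mkQ_apply, ← map_smul, ← map_sum]
    rw [this]
    have h2 : (∑ i : Fin n, (piMap n v i) • Pi.single i (1:ℤ)) = piMap n v := by
      funext j
      simp [Pi.single_apply, Finset.sum_ite_eq']
    rw [h2, mk_ext_pi]

lemma swapLast_apply (n : ℕ) (v : Fin (n + 1) → ℤ) (j : Fin (n + 1)) :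
    swapLast n v j = v (Equiv.swap ⟨n - 1, by omega⟩ ⟨n, by omega⟩ j) := rfl

lemma swapLast_fixed (n : ℕ) (v : Fin (n + 1) → ℤ)
    (h : v ⟨n - 1, by omega⟩ = v ⟨n, by omega⟩) : swapLast n v = v := by
  funext j
  rw [swapLast_apply, Equiv.swap_apply_def]
  split_ifs with h1 h2
  · rw [← h, h1]
  · rw [h, h2]
  · rfl

lemma key_scalar (n : ℕ) (hn : 1 < n) (v : Fin (n+1) → ℤ) (t : Circle1) :
    (piMap n (swapLast n v) ⟨0, by omega⟩) • t
      = (piMap n v ⟨0, by omega⟩) • t - (piMap n v ⟨n - 1, by omega⟩) • t := by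
  rw [← sub_smul]
  congr 1
  set p : Fin (n+1) := ⟨n - 1, by omega⟩ with hp
  set q : Fin (n+1) := ⟨n, by omega⟩ with hq
  have e1 : swapLast n v (Fin.castSucc (⟨0, by omega⟩ : Fin n)) = v ⟨0, by omega⟩ := by
    rw [swapLast_apply]
    congr 1
    exact Equiv.swap_apply_of_ne_of_ne (by simp [Fin.ext_iff, hp]; omega)
      (by simp [Fin.ext_iff, hq]; omega)
  have e2 : swapLast n v (Fin.last n) = v p := by
    rw [swapLast_apply]
    congr 1
    have : Fin.last n = q := rfl
    rw [this, Equiv.swap_apply_right]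
  simp only [piMap, LinearMap.coe_mk, AddHom.coe_mk, e1, e2]
  have h3 : Fin.castSucc (⟨n - 1, by omega⟩ : Fin n) = p := rfl
  have h4 : Fin.castSucc (⟨0, by omega⟩ : Fin n) = (⟨0, by omega⟩ : Fin (n+1)) := rfl
  rw [h3, h4]
  ring

theorem stmt0 (n : ℕ) (hn : 1 < n)
    (ρ : PGLlattice n →ₗ[ℤ] PGLlattice n)
    (hρ : ∀ v : Fin (n + 1) → ℤ,
      ρ (Submodule.Quotient.mk v) = Submodule.Quotient.mk (swapLast n v))
    (y : (PGLlattice n) ⊗[ℤ] Circle1)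
    (hy : TensorProduct.map ρ LinearMap.id y = y) :
    ∃ x : (LinearMap.eqLocus ρ LinearMap.id) ⊗[ℤ] Circle1,
      TensorProduct.map (LinearMap.eqLocus ρ LinearMap.id).subtype LinearMap.id x = y := by
  set Ln : Fin n := ⟨n - 1, by omega⟩ with hLn
  -- the key invariance identity on coordinate 0
  have key : ∀ z : (PGLlattice n) ⊗[ℤ] Circle1,
      phiMap n (TensorProduct.map ρ LinearMap.id z) ⟨0, by omega⟩
        = phiMap n z ⟨0, by omega⟩ - phiMap n z Ln := by
    intro z
    induction z using TensorProduct.induction_on with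
    | zero => simp
    | add z z' hz hz' =>
      simp only [map_add, Pi.add_apply, hz, hz']
      abel
    | tmul lam t =>
      obtain ⟨v, rfl⟩ := Submodule.Quotient.mk_surjective _ lam
      rw [TensorProduct.map_tmul, LinearMap.id_apply, hρ, phiMap_tmul, phiMap_tmul]
      exact key_scalar n hn v t
  -- hence the last coordinate of y vanishes
  have hLzero : phiMap n y Ln = 0 := by
    have h := key y
    rw [hy] at h
    exact sub_eq_self.mp h.symm
  -- the generators away from the last coordinate are fixed by ρ
  have hfix : ∀ i : Fin n, i ≠ Ln → aVec n i ∈ LinearMap.eqLocus ρ LinearMap.id := by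
    intro i hi
    rw [LinearMap.mem_eqLocus, LinearMap.id_apply]
    rw [aVec, hρ]
    congr 1
    apply swapLast_fixed
    have hA : extMap n (Pi.single i (1:ℤ)) ⟨n - 1, by omega⟩ = 0 := by
      have : (⟨n - 1, by omega⟩ : Fin (n + 1)) = Fin.castSucc Ln := rfl
      rw [this]
      show Fin.lastCases (motive := fun _ => ℤ) 0 (Pi.single i 1) (Fin.castSucc Ln) = 0
      rw [Fin.lastCases_castSucc]
      exact Pi.single_eq_of_ne' hi 1
    have hB : extMap n (Pi.single i (1:ℤ)) ⟨n, by omega⟩ = 0 := by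
      have : (⟨n, by omega⟩ : Fin (n + 1)) = Fin.last n := rfl
      rw [this]
      show Fin.lastCases (motive := fun _ => ℤ) 0 (Pi.single i 1) (Fin.last n) = 0
      rw [Fin.lastCases_last]
    rw [hA, hB]
  -- assemble the preimage
  refine ⟨(Finset.univ.erase Ln).attach.sum
      (fun i => (⟨aVec n i.1, hfix i.1 (Finset.ne_of_mem_erase i.2)⟩ :
        LinearMap.eqLocus ρ LinearMap.id) ⊗ₜ[ℤ] (phiMap n y i.1)), ?_⟩
  rw [map_sum]
  simp only [TensorProduct.map_tmul, Submodule.coe_subtype, LinearMap.id_apply]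
  rw [Finset.sum_attach (Finset.univ.erase Ln)
    (fun i => aVec n i ⊗ₜ[ℤ] phiMap n y i)]
  rw [Finset.sum_erase _ (by rw [hLzero, TensorProduct.tmul_zero])]
  exact rep n y

end
end

section
/- Let L be a finitely generated free abelian group and ρ : L → L an automorphism. Then the cokernel of the natural map (L^ρ) ⊗ (ℝ/ℤ) → (L ⊗ (ℝ/ℤ))^ρ is a finite group. -/
/- STATEMENT 5: L a finitely generated free abelian group, ρ : L → L an automorphism.
Then the cokernel of the natural map ν : (L^ρ) ⊗ (ℝ/ℤ) → (L ⊗ ℝ/ℤ)^ρ is finite.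
(L^ρ is presented as a module P embedded in L with image the ρ-fixed elements; F is the
fixed-point subgroup (L ⊗ ℝ/ℤ)^ρ and N ≤ F is the image of ν, so the cokernel is F ⧸ N.) -/

open TensorProduct

noncomputable section

lemma torsionFinite (n : ℤ) (hn : n ≠ 0) : Finite {c : Circle1 // n • c = 0} := by
  haveI : Fact ((0:ℝ) < 1) := ⟨zero_lt_one⟩
  have hsub : {c : Circle1 | n • c = 0} ⊆
      ⋃ d ∈ (n.natAbs).divisors, {u : Circle1 | addOrderOf u = d} := by
    intro c hc
    have hdvd : (addOrderOf c : ℤ) ∣ n := addOrderOf_dvd_iff_zsmul_eq_zero.mpr hc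
    have hdvd' : addOrderOf c ∣ n.natAbs := Int.natCast_dvd_natCast.mp (Int.dvd_natAbs.mpr hdvd)
    have : addOrderOf c ∈ (n.natAbs).divisors :=
      Nat.mem_divisors.mpr ⟨hdvd', Int.natAbs_ne_zero.mpr hn⟩
    exact Set.mem_biUnion this rfl
  have hfin : ({c : Circle1 | n • c = 0}).Finite := by
    refine Set.Finite.subset (Set.Finite.biUnion ((n.natAbs).divisors : Finset ℕ).finite_toSet
      (fun d hd => ?_)) hsub
    exact AddCircle.finite_setOfPred_addOrderOf_eq (1:ℝ) (Nat.pos_of_mem_divisors hd)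
  exact hfin

lemma kerFinite {Q L : Type*} [AddCommGroup Q] [Module ℤ Q] [AddCommGroup L] [Module ℤ L]
    [Module.Free ℤ L] [Module.Finite ℤ L] (u : Q →ₗ[ℤ] L) (hu : Function.Injective u) :
    Finite {z : Q ⊗[ℤ] Circle1 //
      TensorProduct.map u (LinearMap.id : Circle1 →ₗ[ℤ] Circle1) z = 0} := by
  classical
  obtain ⟨m, snf⟩ := (LinearMap.range u).smithNormalForm (Module.Free.chooseBasis ℤ L)
  set ι := Module.Free.ChooseBasisIndex ℤ L
  letI : Module ℤ ↥(LinearMap.range u) := (LinearMap.range u).module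
  have ha : ∀ i, snf.a i ≠ 0 := by
    intro i hai
    refine snf.bN.ne_zero i (Subtype.ext ?_)
    rw [snf.snf i, hai]
    simp only [ZeroMemClass.coe_zero]
    module
  let eQ := LinearEquiv.ofInjective u hu
  let bQ := snf.bN.map eQ.symm
  let EQ := (TensorProduct.congr bQ.repr (LinearEquiv.refl ℤ Circle1)).trans
      (TensorProduct.finsuppScalarLeft ℤ Circle1 (Fin m))
  let EL := (TensorProduct.congr snf.bM.repr (LinearEquiv.refl ℤ Circle1)).trans
      (TensorProduct.finsuppScalarLeft ℤ Circle1 ι)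
  have hrep : ∀ (i : Fin m) (q : Q), snf.bM.repr (u q) (snf.f i) = snf.a i * bQ.repr q i := by
    intro i q
    have hq : u q = ((eQ q : LinearMap.range u) : L) := by
      simp [eQ, LinearEquiv.ofInjective_apply]
    rw [hq, snf.repr_apply_embedding_eq_repr_smul]
    have h2 : bQ.repr q = snf.bN.repr (eQ q) := by
      simp [bQ, Module.Basis.map_repr]
    rw [LinearEquiv.map_smul, Finsupp.smul_apply, h2, smul_eq_mul]
  have key : ∀ (i : Fin m) (w : Q ⊗[ℤ] Circle1),
      EL (TensorProduct.map u (LinearMap.id : Circle1 →ₗ[ℤ] Circle1) w) (snf.f i)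
        = snf.a i • (EQ w i) := by
    intro i w
    induction w using TensorProduct.induction_on with
    | zero => simp
    | tmul q c =>
      have h1 : EL (TensorProduct.map u (LinearMap.id : Circle1 →ₗ[ℤ] Circle1) (q ⊗ₜ c))
          = TensorProduct.finsuppScalarLeft ℤ Circle1 ι (snf.bM.repr (u q) ⊗ₜ c) := by
        simp [EL, TensorProduct.map_tmul, TensorProduct.congr_tmul]
      have h2 : EQ (q ⊗ₜ c)
          = TensorProduct.finsuppScalarLeft ℤ Circle1 (Fin m) (bQ.repr q ⊗ₜ c) := by
        simp [EQ, TensorProduct.congr_tmul]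
      rw [h1, h2, TensorProduct.finsuppScalarLeft_apply_tmul_apply,
        TensorProduct.finsuppScalarLeft_apply_tmul_apply, hrep i q, mul_smul]
    | add x y hx hy =>
      rw [map_add, map_add, map_add, Finsupp.add_apply, Finsupp.add_apply, hx, hy, smul_add]
  have hz : ∀ z : {z : Q ⊗[ℤ] Circle1 //
      TensorProduct.map u (LinearMap.id : Circle1 →ₗ[ℤ] Circle1) z = 0}, ∀ i : Fin m,
      snf.a i • (EQ z.1 i) = 0 := by
    intro z i
    have h := key i z.1
    rw [z.2, map_zero] at h
    simpa using h.symm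
  haveI : ∀ i : Fin m, Finite {c : Circle1 // snf.a i • c = 0} :=
    fun i => torsionFinite (snf.a i) (ha i)
  refine Finite.of_injective
    (fun z : {z : Q ⊗[ℤ] Circle1 //
        TensorProduct.map u (LinearMap.id : Circle1 →ₗ[ℤ] Circle1) z = 0} =>
      (fun i => (⟨EQ z.1 i, hz z i⟩ : {c : Circle1 // snf.a i • c = 0}))) ?_
  intro z₁ z₂ h
  apply Subtype.ext
  apply EQ.injective
  ext i
  exact congrArg Subtype.val (congrFun h i)

theorem stmt5 (L : Type*) [AddCommGroup L] [Module ℤ L]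
    [Module.Free ℤ L] [Module.Finite ℤ L]
    (ρ : L ≃ₗ[ℤ] L)
    -- P is the fixed subgroup L^ρ, embedded in L via j
    (P : Type*) [AddCommGroup P] [Module ℤ P] (j : P →ₗ[ℤ] L)
    (hjinj : Function.Injective j)
    (hjrange : LinearMap.range j = LinearMap.eqLocus ρ.toLinearMap LinearMap.id)
    -- F is the fixed-point subgroup (L ⊗ ℝ/ℤ)^ρ
    (F : AddSubgroup (L ⊗[ℤ] Circle1))
    (hF : ∀ y : L ⊗[ℤ] Circle1,
      y ∈ F ↔ TensorProduct.map ρ.toLinearMap LinearMap.id y = y)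
    -- N is the image of the natural map ν = j ⊗ id inside F
    (N : AddSubgroup F)
    (hN : ∀ z : F, z ∈ N ↔
      ∃ x : P ⊗[ℤ] Circle1,
        TensorProduct.map j (LinearMap.id : Circle1 →ₗ[ℤ] Circle1) x = (z : L ⊗[ℤ] Circle1)) :
    Finite ((↥F) ⧸ N) := by
  classical
  letI : Module ℤ (L ⊗[ℤ] Circle1) := TensorProduct.instModule
  letI : Module ℤ (P ⊗[ℤ] Circle1) := TensorProduct.instModule
  set f : L →ₗ[ℤ] L := ρ.toLinearMap - LinearMap.id with hfdef
  have hker : LinearMap.range j = LinearMap.ker f := by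
    rw [hjrange, LinearMap.eqLocus_eq_ker_sub]
  set W := LinearMap.range f with hWdef
  letI : Module ℤ ↥W := W.module
  letI : Module ℤ (↥W ⊗[ℤ] Circle1) := TensorProduct.instModule
  haveI : Module.Finite ℤ ↥W := Module.Finite.iff_fg.mpr (IsNoetherian.noetherian W)
  haveI : Module.Free ℤ ↥W := inferInstance
  set π : L →ₗ[ℤ] ↥W := f.rangeRestrict with hπdef
  obtain ⟨s, hs⟩ := Module.projective_lifting_property π LinearMap.id f.surjective_rangeRestrict
  -- F is the kernel of f ⊗ id
  have hFf : ∀ y : L ⊗[ℤ] Circle1, y ∈ F ↔ LinearMap.rTensor Circle1 f y = 0 := by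
    intro y
    have hTf : LinearMap.rTensor Circle1 f
        = LinearMap.rTensor Circle1 ρ.toLinearMap - LinearMap.id := by
      rw [hfdef, LinearMap.rTensor_sub, LinearMap.rTensor_id]
    rw [hF y, hTf]
    simp only [LinearMap.sub_apply, LinearMap.id_apply, sub_eq_zero]
    exact ⟨fun h => h.symm ▸ rfl, fun h => h⟩
  have hπj : π ∘ₗ j = 0 := by
    ext p
    have hmem : j p ∈ LinearMap.ker f := hker ▸ LinearMap.mem_range_self j p
    simpa [hπdef] using hmem
  -- exactness: ker (π ⊗ id) = range (j ⊗ id)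
  have hexact : ∀ z : L ⊗[ℤ] Circle1, LinearMap.rTensor Circle1 π z = 0 →
      ∃ x : P ⊗[ℤ] Circle1, LinearMap.rTensor Circle1 j x = z := by
    intro z hz
    letI : Module ℤ ↥(LinearMap.range j) := (LinearMap.range j).module
    set σ : L →ₗ[ℤ] L := LinearMap.id - s ∘ₗ π with hσdef
    have hσrange : ∀ x, σ x ∈ LinearMap.range j := by
      intro x
      rw [hker, LinearMap.mem_ker]
      have hπσ : π (σ x) = 0 := by
        have h0 : π (s (π x)) = π x := LinearMap.congr_fun hs (π x)
        simp only [hσdef, LinearMap.sub_apply, LinearMap.id_apply, LinearMap.comp_apply, map_sub]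
        rw [h0]
        exact sub_self _
      have : (π (σ x) : L) = f (σ x) := rfl
      rw [← this, hπσ]
      rfl
    let e := LinearEquiv.ofInjective j hjinj
    let τ : L →ₗ[ℤ] P := e.symm.toLinearMap ∘ₗ (σ.codRestrict (LinearMap.range j) hσrange)
    have hjτ : j ∘ₗ τ = σ := by
      ext x
      have h1 : (e (e.symm ⟨σ x, hσrange x⟩) : L) = j (e.symm ⟨σ x, hσrange x⟩) :=
        LinearEquiv.ofInjective_apply j _
      have h2 : e (e.symm ⟨σ x, hσrange x⟩) = ⟨σ x, hσrange x⟩ := e.apply_symm_apply _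
      show j (e.symm ⟨σ x, hσrange x⟩) = σ x
      rw [← h1, h2]
    refine ⟨LinearMap.rTensor Circle1 τ z, ?_⟩
    have hcomp : LinearMap.rTensor Circle1 j (LinearMap.rTensor Circle1 τ z)
        = LinearMap.rTensor Circle1 σ z := by
      rw [← LinearMap.rTensor_comp_apply, hjτ]
    rw [hcomp, hσdef, LinearMap.rTensor_sub, LinearMap.rTensor_id]
    rw [LinearMap.sub_apply, LinearMap.id_apply, LinearMap.rTensor_comp, LinearMap.comp_apply,
      hz, map_zero, sub_zero]
  -- the quotient map into ker (ι ⊗ id)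
  haveI hT : Finite {y : ↥W ⊗[ℤ] Circle1 //
      TensorProduct.map W.subtype (LinearMap.id : Circle1 →ₗ[ℤ] Circle1) y = 0} :=
    kerFinite W.subtype W.injective_subtype
  let φ₀ : F →+ (↥W ⊗[ℤ] Circle1) :=
    ((LinearMap.rTensor Circle1 π).toAddMonoidHom).comp F.subtype
  have hφ₀ : ∀ z : F, z ∈ N → φ₀ z = 0 := by
    intro z hz
    obtain ⟨x, hx⟩ := (hN z).mp hz
    have hx' : LinearMap.rTensor Circle1 j x = (z : L ⊗[ℤ] Circle1) := hx
    show LinearMap.rTensor Circle1 π (z : L ⊗[ℤ] Circle1) = 0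
    rw [← hx', ← LinearMap.rTensor_comp_apply, hπj, LinearMap.rTensor_zero, LinearMap.zero_apply]
  let φ : (↥F) ⧸ N →+ (↥W ⊗[ℤ] Circle1) := QuotientAddGroup.lift N φ₀ hφ₀
  have hmem : ∀ q : (↥F) ⧸ N,
      TensorProduct.map W.subtype (LinearMap.id : Circle1 →ₗ[ℤ] Circle1) (φ q) = 0 := by
    intro q
    induction q using QuotientAddGroup.induction_on with
    | H z =>
      show TensorProduct.map W.subtype (LinearMap.id : Circle1 →ₗ[ℤ] Circle1)
        (LinearMap.rTensor Circle1 π (z : L ⊗[ℤ] Circle1)) = 0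
      have : W.subtype ∘ₗ π = f := LinearMap.subtype_comp_codRestrict _ _ _
      rw [show TensorProduct.map W.subtype (LinearMap.id : Circle1 →ₗ[ℤ] Circle1)
          = LinearMap.rTensor Circle1 W.subtype from rfl,
        ← LinearMap.rTensor_comp_apply, this]
      exact (hFf _).mp z.2
  have hφinj : Function.Injective φ := by
    rw [injective_iff_map_eq_zero]
    intro q hq
    induction q using QuotientAddGroup.induction_on with
    | H z =>
      have hz : LinearMap.rTensor Circle1 π (z : L ⊗[ℤ] Circle1) = 0 := hq
      obtain ⟨x, hx⟩ := hexact _ hz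
      have : z ∈ N := (hN z).mpr ⟨x, hx⟩
      exact (QuotientAddGroup.eq_zero_iff z).mpr this
  exact Finite.of_injective
    (fun q : (↥F) ⧸ N => (⟨φ q, hmem q⟩ : {y : ↥W ⊗[ℤ] Circle1 //
      TensorProduct.map W.subtype (LinearMap.id : Circle1 →ₗ[ℤ] Circle1) y = 0}))
    (fun a b h => hφinj (congrArg Subtype.val h))

end
end
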